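/- In a many-to-one stable matching market with capacities, any two stable matchings match each institution to the same number of students: for all stable M, M' and all institutions i, |M(i)| = |M'(i)|. -/

import Mathlib

open Finset

/-- A (many-to-one) matching market: acceptability edges, capacities, and
rank functions encoding strict preferences (lower rank = more preferred). -/
structure Market (S I : Type*) where
  E : Finset (S × I)
  q : I → ℕ
  prefS : S → I → ℕ
  prefI : I → S → ℕ

variable {S I : Type*} [DecidableEq S] [DecidableEq I]

/-- The edges of `M` incident to institution `i`. -/
def edgesOf (M : Finset (S × I)) (i : I) : Finset (S × I) :=
  M.filter (fun e => e.2 = i)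

/-- The set of students assigned to institution `i` under `M`. -/
def assigned (M : Finset (S × I)) (i : I) : Finset S :=
  (edgesOf M i).image Prod.fst

/-- `M` is a matching: it uses acceptable edges, each student is matched at most
once, and each institution `i` is matched to at most `q i` students. -/
def IsMatching (mkt : Market S I) (M : Finset (S × I)) : Prop :=
  M ⊆ mkt.E ∧ (∀ s : S, (M.filter (fun e => e.1 = s)).card ≤ 1) ∧
    ∀ i : I, (edgesOf M i).card ≤ mkt.q i

/-- `(s, i)` blocks `M`: it is an acceptable non-matching pair, `s` strictly prefers
`i` to her assignment (being unmatched is worst), and `i` has a free seat or a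
student it likes strictly less than `s`. -/
def Blocks (mkt : Market S I) (M : Finset (S × I)) (s : S) (i : I) : Prop :=
  (s, i) ∈ mkt.E ∧ (s, i) ∉ M ∧
    (∀ i' : I, (s, i') ∈ M → mkt.prefS s i < mkt.prefS s i') ∧
    ((edgesOf M i).card < mkt.q i ∨ ∃ s' ∈ assigned M i, mkt.prefI i s < mkt.prefI i s')

/-- A stable matching admits no blocking pair. -/
def IsStable (mkt : Market S I) (M : Finset (S × I)) : Prop :=
  IsMatching mkt M ∧ ∀ s i, ¬ Blocks mkt M s i

section RH

variable [Fintype S] [Fintype I]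

/-- Edges of `M \ M'` whose student prefers this edge to any `M'`-assignment. -/
def Xset (mkt : Market S I) (M M' : Finset (S × I)) : Finset (S × I) :=
  (M \ M').filter (fun e => ∀ j : I, (e.1, j) ∈ M' → mkt.prefS e.1 e.2 < mkt.prefS e.1 j)

/-- The remaining edges of `M \ M'`. -/
def Yset (mkt : Market S I) (M M' : Finset (S × I)) : Finset (S × I) :=
  (M \ M') \ Xset mkt M M'

set_option linter.unusedSectionVars false in
lemma partner_unique {M : Finset (S × I)} (h : ∀ s : S, (M.filter (fun e => e.1 = s)).card ≤ 1)
    {s : S} {i j : I} (hi : (s, i) ∈ M) (hj : (s, j) ∈ M) : i = j := by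
  have h1 : (s, i) ∈ M.filter (fun e => e.1 = s) := by simp [hi]
  have h2 : (s, j) ∈ M.filter (fun e => e.1 = s) := by simp [hj]
  have := Finset.card_le_one.mp (h s) _ h1 _ h2
  exact (Prod.mk.injEq _ _ _ _ ▸ this).2

set_option linter.unusedSectionVars false in
lemma mem_assigned {M : Finset (S × I)} {s : S} {i : I} :
    s ∈ assigned M i ↔ (s, i) ∈ M := by
  constructor
  · rintro hs
    simp only [assigned, edgesOf, mem_image, mem_filter] at hs
    obtain ⟨e, ⟨heM, he2⟩, he1⟩ := hs
    rwa [show (s, i) = e from Prod.ext he1.symm he2.symm]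
  · intro h
    simp only [assigned, edgesOf, mem_image, mem_filter]
    exact ⟨(s, i), ⟨h, rfl⟩, rfl⟩

/-- Stability consequence for an `X`-edge `(s,i)`: `i` is full in `M'` and
prefers all its `M'`-students to `s`. -/
lemma Xset_full {mkt : Market S I}
    (hstrictI : ∀ i, Function.Injective (mkt.prefI i))
    {M M' : Finset (S × I)} (hME : M ⊆ mkt.E) (hM' : IsStable mkt M')
    {s : S} {i : I} (he : (s, i) ∈ Xset mkt M M') :
    (edgesOf M' i).card = mkt.q i ∧
      ∀ s' ∈ assigned M' i, mkt.prefI i s' < mkt.prefI i s := by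
  simp only [Xset, mem_filter, mem_sdiff] at he
  obtain ⟨⟨hM, hnM'⟩, hpref⟩ := he
  have hnb := hM'.2 s i
  rw [Blocks] at hnb
  push_neg at hnb
  have h4 := hnb (hME hM) hnM' hpref
  refine ⟨le_antisymm (hM'.1.2.2 i) h4.1, fun s' hs' => ?_⟩
  have hne : s' ≠ s := by
    rintro rfl; exact hnM' (mem_assigned.mp hs')
  have := h4.2 s' hs'
  rcases lt_or_eq_of_le this with h | h
  · exact h
  · exact absurd (hstrictI i h) hne

/-- No institution has both an `X (M,M')`-edge and an `X (M',M)`-edge. -/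
lemma Xset_not_both {mkt : Market S I}
    (hstrictI : ∀ i, Function.Injective (mkt.prefI i))
    {M M' : Finset (S × I)} (hM : IsStable mkt M) (hM' : IsStable mkt M')
    {s t : S} {i : I} (ht : (t, i) ∈ Xset mkt M M') (hs : (s, i) ∈ Xset mkt M' M) :
    False := by
  have h1 := (Xset_full hstrictI hM.1.1 hM' ht).2
  have h2 := (Xset_full hstrictI hM'.1.1 hM hs).2
  have hsM' : (s, i) ∈ M' := by
    have := hs; simp only [Xset, mem_filter, mem_sdiff] at this; exact this.1.1
  have htM : (t, i) ∈ M := by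
    have := ht; simp only [Xset, mem_filter, mem_sdiff] at this; exact this.1.1
  have := h1 s (mem_assigned.mpr hsM')
  have := h2 t (mem_assigned.mpr htM)
  omega

/-- The map `(s,i) ↦ (s, M'(s))` injects `Y (M,M')` into `X (M',M)`. -/
lemma Yset_card_le {mkt : Market S I} (hstrictS : ∀ s, Function.Injective (mkt.prefS s))
    {M M' : Finset (S × I)} (hM : IsMatching mkt M) (hM' : IsMatching mkt M') :
    (Yset mkt M M').card ≤ (Xset mkt M' M).card := by
  classical
  apply Finset.card_le_card_of_injOn
    (fun e => (e.1, if h : ∃ j : I, (e.1, j) ∈ M' then h.choose else e.2))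
  · intro e he
    simp only [Yset, Xset, mem_coe, mem_sdiff, mem_filter, not_and, not_forall] at he
    obtain ⟨⟨heM, heM'⟩, hY⟩ := he
    obtain ⟨j, hjM', hjle⟩ := hY ⟨heM, heM'⟩
    push_neg at hjle
    have hex : ∃ j : I, (e.1, j) ∈ M' := ⟨j, hjM'⟩
    have hchoose : hex.choose = j := partner_unique hM'.2.1 hex.choose_spec hjM'
    simp only [Xset, mem_coe, mem_filter, mem_sdiff, dif_pos hex, hchoose]
    have hne : j ≠ e.2 := by
      rintro rfl
      exact heM' hjM'
    have hjlt : mkt.prefS e.1 j < mkt.prefS e.1 e.2 :=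
      lt_of_le_of_ne hjle (fun h => hne (hstrictS e.1 h))
    have hjM : (e.1, j) ∉ M := by
      intro hmem
      exact hne (partner_unique hM.2.1 hmem heM)
    refine ⟨⟨hjM', hjM⟩, fun k hk => ?_⟩
    have : k = e.2 := partner_unique hM.2.1 hk heM
    subst this
    exact hjlt
  · intro e he f hf heq
    simp only [Prod.mk.injEq] at heq
    obtain ⟨h1, _⟩ := heq
    simp only [Yset, mem_coe, mem_sdiff, Xset, mem_filter] at he hf
    have he2 : e = (e.1, e.2) := rfl
    have hf2 : f = (f.1, f.2) := rfl
    have : e.2 = f.2 := by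
      apply partner_unique hM.2.1 (s := e.1)
      · exact he.1.1
      · rw [h1]; exact hf.1.1
    exact Prod.ext h1 this

set_option linter.unusedSectionVars false in
/-- Fiberwise counting: summing edge counts over institutions gives the size. -/
lemma sum_edgesOf (A : Finset (S × I)) :
    ∑ i : I, (edgesOf A i).card = A.card :=
  (Finset.card_eq_sum_card_fiberwise (f := Prod.snd) (fun e _ => mem_univ e.2)).symm

set_option linter.unusedSectionVars false in
lemma edgesOf_sdiff (A B : Finset (S × I)) (i : I) :
    edgesOf (A \ B) i = edgesOf A i \ edgesOf B i := by
  ext e; simp only [edgesOf, mem_filter, mem_sdiff]; tauto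

set_option linter.unusedSectionVars false in
lemma edgesOf_subset {A B : Finset (S × I)} (h : A ⊆ B) (i : I) :
    edgesOf A i ⊆ edgesOf B i := by
  intro e; simp only [edgesOf, mem_filter]; exact fun ⟨h1, h2⟩ => ⟨h h1, h2⟩

set_option linter.unusedSectionVars false in
/-- Decomposition of the edge count at `i`. -/
lemma edgesOf_card_decomp (mkt : Market S I) (M M' : Finset (S × I)) (i : I) :
    (edgesOf M i).card = (edgesOf (M ∩ M') i).card
      + (edgesOf (Xset mkt M M') i).card + (edgesOf (Yset mkt M M') i).card := by
  classical
  have h1 : edgesOf M i = edgesOf (M ∩ M') i ∪ edgesOf (M \ M') i := by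
    ext e; simp only [edgesOf, mem_filter, mem_union, mem_inter, mem_sdiff]; tauto
  have hd1 : Disjoint (edgesOf (M ∩ M') i) (edgesOf (M \ M') i) := by
    simp only [Finset.disjoint_left, edgesOf, mem_filter, mem_inter, mem_sdiff]; tauto
  have hu : Xset mkt M M' ∪ Yset mkt M M' = M \ M' :=
    Finset.union_sdiff_of_subset (filter_subset _ _)
  have h2 : edgesOf (M \ M') i = edgesOf (Xset mkt M M') i ∪ edgesOf (Yset mkt M M') i := by
    rw [← hu]; ext e; simp only [edgesOf, mem_filter, mem_union]; tauto
  have hd2 : Disjoint (edgesOf (Xset mkt M M') i) (edgesOf (Yset mkt M M') i) :=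
    Finset.disjoint_sdiff.mono (filter_subset _ _) (filter_subset _ _)
  rw [h1, card_union_of_disjoint hd1, h2, card_union_of_disjoint hd2, add_assoc]

/-- The key counting lemma: institutions with an `X (M,M')`-edge have equal fill,
and institutions with no `X (M,M')`-edge carry no `Y (M',M)`-edge. -/
lemma key {mkt : Market S I} (hstrictS : ∀ s, Function.Injective (mkt.prefS s))
    (hstrictI : ∀ i, Function.Injective (mkt.prefI i))
    {M M' : Finset (S × I)} (hM : IsStable mkt M) (hM' : IsStable mkt M') :
    (∀ i, 0 < (edgesOf (Xset mkt M M') i).card →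
        (edgesOf M i).card = (edgesOf M' i).card) ∧
    (∀ i, (edgesOf (Xset mkt M M') i).card = 0 →
        (edgesOf (Yset mkt M' M) i).card = 0) := by
  classical
  set x : I → ℕ := fun i => (edgesOf (Xset mkt M M') i).card with hxdef
  set y : I → ℕ := fun i => (edgesOf (Yset mkt M M') i).card with hydef
  set x' : I → ℕ := fun i => (edgesOf (Xset mkt M' M) i).card with hx'def
  set y' : I → ℕ := fun i => (edgesOf (Yset mkt M' M) i).card with hy'def
  set c : I → ℕ := fun i => (edgesOf (M ∩ M') i).card with hcdef
  set P : Finset I := univ.filter (fun i => 0 < x i) with hPdef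
  have hmemP : ∀ i, i ∈ P ↔ 0 < x i := by
    intro i; simp [hPdef]
  -- decompositions
  have hdecA : ∀ i, (edgesOf M i).card = c i + x i + y i := fun i =>
    edgesOf_card_decomp mkt M M' i
  have hdecB : ∀ i, (edgesOf M' i).card = c i + x' i + y' i := by
    intro i
    have := edgesOf_card_decomp mkt M' M i
    rwa [Finset.inter_comm] at this
  -- (A): at an institution with an X-edge, M' is full hence at least as big
  have hab : ∀ i ∈ P, (edgesOf M i).card ≤ (edgesOf M' i).card := by
    intro i hi
    obtain ⟨e, he⟩ := Finset.card_pos.mp ((hmemP i).mp hi)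
    have he2 : e.2 = i := by
      simp only [edgesOf, mem_filter] at he; exact he.2
    have heX : (e.1, i) ∈ Xset mkt M M' := by
      rw [← he2]
      simp only [edgesOf, mem_filter] at he; exact he.1
    have hfull := (Xset_full hstrictI hM.1.1 hM' heX).1
    calc (edgesOf M i).card ≤ mkt.q i := hM.1.2.2 i
      _ = (edgesOf M' i).card := hfull.symm
  -- (B): no X'-edge at an institution in P
  have hx'0 : ∀ i ∈ P, x' i = 0 := by
    intro i hi
    by_contra h
    obtain ⟨e, he⟩ := Finset.card_pos.mp (Nat.pos_of_ne_zero h)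
    obtain ⟨f, hf⟩ := Finset.card_pos.mp ((hmemP i).mp hi)
    simp only [edgesOf, mem_filter] at he hf
    have he' : (e.1, i) ∈ Xset mkt M' M := by rw [← he.2]; exact he.1
    have hf' : (f.1, i) ∈ Xset mkt M M' := by rw [← hf.2]; exact hf.1
    exact Xset_not_both hstrictI hM hM' hf' he'
  -- x is supported on P
  have hxP : ∑ i ∈ P, x i = ∑ i : I, x i := by
    apply Finset.sum_subset (Finset.subset_univ P)
    intro i _ hi
    rw [hmemP] at hi
    omega
  -- (C): global injection bound
  have hYX : ∑ i : I, y' i ≤ ∑ i : I, x i := by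
    rw [hy'def, hxdef]
    simp only
    rw [sum_edgesOf, sum_edgesOf]
    exact Yset_card_le hstrictS hM'.1 hM.1
  -- chain of sums
  have hS1 : ∑ i ∈ P, (edgesOf M i).card ≤ ∑ i ∈ P, (edgesOf M' i).card :=
    Finset.sum_le_sum hab
  have hA : ∑ i ∈ P, (edgesOf M i).card
      = ∑ i ∈ P, c i + ∑ i : I, x i + ∑ i ∈ P, y i := by
    rw [← hxP]
    simp only [hdecA]
    rw [Finset.sum_add_distrib, Finset.sum_add_distrib]
  have hB : ∑ i ∈ P, (edgesOf M' i).card = ∑ i ∈ P, c i + ∑ i ∈ P, y' i := by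
    simp only [hdecB]
    rw [Finset.sum_add_distrib, Finset.sum_add_distrib,
      Finset.sum_congr rfl hx'0]
    simp
  have h3 : ∑ i ∈ P, y' i ≤ ∑ i : I, y' i :=
    Finset.sum_le_sum_of_subset (Finset.subset_univ P)
  -- extract equalities
  have hyP0 : ∑ i ∈ P, y i = 0 := by omega
  have hsumeq : ∑ i ∈ P, (edgesOf M i).card = ∑ i ∈ P, (edgesOf M' i).card := by
    omega
  have hy'eq : ∑ i ∈ P, y' i = ∑ i : I, y' i := by omega
  constructor
  · intro i hxi
    exact (Finset.sum_eq_sum_iff_of_le hab).mp hsumeq i ((hmemP i).mpr hxi)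
  · intro i hxi
    have hsd : ∑ i ∈ univ \ P, y' i = 0 := by
      have := Finset.sum_sdiff (f := y') (Finset.subset_univ P)
      omega
    have hxi' : x i = 0 := hxi
    refine Finset.sum_eq_zero_iff.mp hsd i ?_
    rw [Finset.mem_sdiff, hmemP]
    exact ⟨Finset.mem_univ i, by omega⟩

end RH

/-- Rural Hospitals: any two stable matchings match each institution to the
same number of students. -/
theorem stmt1 [Fintype S] [Fintype I] (mkt : Market S I)
    (hstrictS : ∀ s, Function.Injective (mkt.prefS s))
    (hstrictI : ∀ i, Function.Injective (mkt.prefI i))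
    (M M' : Finset (S × I)) (hM : IsStable mkt M) (hM' : IsStable mkt M') :
    ∀ i : I, (edgesOf M i).card = (edgesOf M' i).card := by
  intro i
  obtain ⟨k1, k2⟩ := key hstrictS hstrictI hM hM'
  obtain ⟨k1', k2'⟩ := key hstrictS hstrictI hM' hM
  by_cases h1 : 0 < (edgesOf (Xset mkt M M') i).card
  · exact k1 i h1
  by_cases h2 : 0 < (edgesOf (Xset mkt M' M) i).card
  · exact (k1' i h2).symm
  · have hx : (edgesOf (Xset mkt M M') i).card = 0 := by omega
    have hx' : (edgesOf (Xset mkt M' M) i).card = 0 := by omega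
    have hy' := k2 i hx
    have hy := k2' i hx'
    have dA := edgesOf_card_decomp mkt M M' i
    have dB := edgesOf_card_decomp mkt M' M i
    rw [Finset.inter_comm] at dB
    omega
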